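/- For any third order tensor X in R^{n1×n2×n3}, TriRank(X) is at most the middle value of the Tucker rank: TriRank(X) ≤ mid{r1, r2, r3}, where r_k is the matrix rank of the mode-k unfolding of X. -/

import Mathlib

open Matrix

noncomputable def tripleProd {n1 n2 n3 r : ℕ}
    (A : Fin n1 → Fin r → Fin r → ℝ) (B : Fin r → Fin n2 → Fin r → ℝ)
    (C : Fin r → Fin r → Fin n3 → ℝ) : Fin n1 → Fin n2 → Fin n3 → ℝ :=
  fun i j t => ∑ p : Fin r, ∑ q : Fin r, ∑ s : Fin r, A i q s * B p j s * C p q t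

noncomputable def TriRank {n1 n2 n3 : ℕ} (X : Fin n1 → Fin n2 → Fin n3 → ℝ) : ℕ :=
  sInf {r : ℕ | ∃ (A : Fin n1 → Fin r → Fin r → ℝ) (B : Fin r → Fin n2 → Fin r → ℝ)
    (C : Fin r → Fin r → Fin n3 → ℝ), X = tripleProd A B C}

noncomputable def CPRank {n1 n2 n3 : ℕ} (X : Fin n1 → Fin n2 → Fin n3 → ℝ) : ℕ :=
  sInf {r : ℕ | ∃ (A : Fin n1 → Fin r → ℝ) (B : Fin n2 → Fin r → ℝ) (C : Fin n3 → Fin r → ℝ),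
    X = fun i j t => ∑ p : Fin r, A i p * B j p * C t p}

def mid (a b c : ℕ) : ℕ := max (min a b) (min (max a b) c)

noncomputable def mode1 {m' m n k : ℕ} (U : Matrix (Fin m') (Fin m) ℝ)
    (D : Fin m → Fin n → Fin k → ℝ) : Fin m' → Fin n → Fin k → ℝ :=
  fun i j t => ∑ p : Fin m, U i p * D p j t

noncomputable def mode2 {m n' n k : ℕ} (V : Matrix (Fin n') (Fin n) ℝ)
    (D : Fin m → Fin n → Fin k → ℝ) : Fin m → Fin n' → Fin k → ℝ :=
  fun i j t => ∑ q : Fin n, V j q * D i q t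

noncomputable def mode3 {m n k' k : ℕ} (W : Matrix (Fin k') (Fin k) ℝ)
    (D : Fin m → Fin n → Fin k → ℝ) : Fin m → Fin n → Fin k' → ℝ :=
  fun i j t => ∑ s : Fin k, W t s * D i j s

noncomputable def tucker {n1 n2 n3 r1 r2 r3 : ℕ} (U : Matrix (Fin n1) (Fin r1) ℝ)
    (V : Matrix (Fin n2) (Fin r2) ℝ) (W : Matrix (Fin n3) (Fin r3) ℝ)
    (D : Fin r1 → Fin r2 → Fin r3 → ℝ) : Fin n1 → Fin n2 → Fin n3 → ℝ :=
  mode1 U (mode2 V (mode3 W D))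

def unfold1 {a b c : ℕ} (T : Fin a → Fin b → Fin c → ℝ) : Matrix (Fin a) (Fin b × Fin c) ℝ :=
  fun i jt => T i jt.1 jt.2
def unfold2 {a b c : ℕ} (T : Fin a → Fin b → Fin c → ℝ) : Matrix (Fin b) (Fin a × Fin c) ℝ :=
  fun j it => T it.1 j it.2
def unfold3 {a b c : ℕ} (T : Fin a → Fin b → Fin c → ℝ) : Matrix (Fin c) (Fin a × Fin b) ℝ :=
  fun t ij => T ij.1 ij.2 t

lemma proj_exists {n : ℕ} {ι : Type*} [Fintype ι] [DecidableEq ι] (M : Matrix (Fin n) ι ℝ) :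
    ∃ (U : Matrix (Fin n) (Fin M.rank) ℝ) (L : Matrix (Fin M.rank) (Fin n) ℝ),
      ∀ (j : ι) (i : Fin n), (∑ k, (∑ p, U i p * L p k) * M k j) = M i j := by
  set S := LinearMap.range M.mulVecLin with hS
  let b : Module.Basis (Fin M.rank) ℝ S := Module.finBasis ℝ S
  let f : (Fin M.rank → ℝ) →ₗ[ℝ] (Fin n → ℝ) := S.subtype ∘ₗ (b.equivFun.symm : (Fin M.rank → ℝ) ≃ₗ[ℝ] S).toLinearMap
  have hfinj : Function.Injective f := by
    apply Function.Injective.comp (Submodule.injective_subtype S)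
    exact b.equivFun.symm.injective
  obtain ⟨g, hg⟩ := LinearMap.exists_leftInverse_of_injective f (LinearMap.ker_eq_bot.mpr hfinj)
  refine ⟨fun i p => (b p : Fin n → ℝ) i, LinearMap.toMatrix' g, ?_⟩
  set U : Matrix (Fin n) (Fin M.rank) ℝ := fun i p => (b p : Fin n → ℝ) i with hU
  set L : Matrix (Fin M.rank) (Fin n) ℝ := LinearMap.toMatrix' g with hL
  have hUf : ∀ v, U *ᵥ v = f v := by
    intro v
    funext i
    have : f v = ((∑ p, v p • b p : S) : Fin n → ℝ) := by
      simp [f, Module.Basis.equivFun_symm_apply]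
    rw [this]
    rw [show ((∑ p, v p • b p : S) : Fin n → ℝ) = ∑ p, v p • (b p : Fin n → ℝ) by
      push_cast; rfl]
    simp [mulVec, dotProduct, U, Finset.sum_apply, mul_comm]
  have hLg : ∀ x, L *ᵥ x = g x := by
    intro x
    rw [← Matrix.toLin'_apply, hL, Matrix.toLin'_toMatrix']
  have hfix : ∀ v ∈ S, U *ᵥ (L *ᵥ v) = v := by
    intro v hv
    set w := b.equivFun ⟨v, hv⟩ with hw
    have hfw : f w = v := by
      have h1 : b.equivFun.symm w = ⟨v, hv⟩ := LinearEquiv.symm_apply_apply _ _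
      simp [f, h1]
    rw [← hfw, hLg, hUf]
    have := LinearMap.congr_fun hg w
    simp only [LinearMap.coe_comp, Function.comp_apply, LinearMap.id_apply] at this
    rw [this]
  intro j i
  have hcol : (fun k => M k j) ∈ S := by
    refine ⟨Pi.single j 1, ?_⟩
    funext k
    simp [mulVecLin, mulVec, dotProduct, Pi.single_apply]
  have := congr_fun (hfix _ hcol) i
  rw [mulVec_mulVec] at this
  simpa [mulVec, dotProduct, Matrix.mul_apply] using this

lemma mode12_comm {m' m n' n k : ℕ} (A : Matrix (Fin m') (Fin m) ℝ)
    (B : Matrix (Fin n') (Fin n) ℝ) (D : Fin m → Fin n → Fin k → ℝ) :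
    mode1 A (mode2 B D) = mode2 B (mode1 A D) := by
  funext i j t
  simp only [mode1, mode2, Finset.mul_sum]
  rw [Finset.sum_comm]
  congr 1; ext q; congr 1; ext p; ring

lemma mode13_comm {m' m n k' k : ℕ} (A : Matrix (Fin m') (Fin m) ℝ)
    (B : Matrix (Fin k') (Fin k) ℝ) (D : Fin m → Fin n → Fin k → ℝ) :
    mode1 A (mode3 B D) = mode3 B (mode1 A D) := by
  funext i j t
  simp only [mode1, mode3, Finset.mul_sum]
  rw [Finset.sum_comm]
  congr 1; ext q; congr 1; ext p; ring

lemma mode23_comm {m n' n k' k : ℕ} (A : Matrix (Fin n') (Fin n) ℝ)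
    (B : Matrix (Fin k') (Fin k) ℝ) (D : Fin m → Fin n → Fin k → ℝ) :
    mode2 A (mode3 B D) = mode3 B (mode2 A D) := by
  funext i j t
  simp only [mode2, mode3, Finset.mul_sum]
  rw [Finset.sum_comm]
  congr 1; ext q; congr 1; ext p; ring

lemma mode1_mode1 {m'' m' m n k : ℕ} (A : Matrix (Fin m'') (Fin m') ℝ)
    (B : Matrix (Fin m') (Fin m) ℝ) (D : Fin m → Fin n → Fin k → ℝ) :
    mode1 A (mode1 B D) = mode1 (A * B) D := by
  funext i j t
  simp only [mode1, Finset.mul_sum, Matrix.mul_apply, Finset.sum_mul]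
  rw [Finset.sum_comm]
  congr 1; ext q; congr 1; ext p; ring

lemma mode2_mode2 {m n'' n' n k : ℕ} (A : Matrix (Fin n'') (Fin n') ℝ)
    (B : Matrix (Fin n') (Fin n) ℝ) (D : Fin m → Fin n → Fin k → ℝ) :
    mode2 A (mode2 B D) = mode2 (A * B) D := by
  funext i j t
  simp only [mode2, Finset.mul_sum, Matrix.mul_apply, Finset.sum_mul]
  rw [Finset.sum_comm]
  congr 1; ext q; congr 1; ext p; ring

lemma mode3_mode3 {m n k'' k' k : ℕ} (A : Matrix (Fin k'') (Fin k') ℝ)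
    (B : Matrix (Fin k') (Fin k) ℝ) (D : Fin m → Fin n → Fin k → ℝ) :
    mode3 A (mode3 B D) = mode3 (A * B) D := by
  funext i j t
  simp only [mode3, Finset.mul_sum, Matrix.mul_apply, Finset.sum_mul]
  rw [Finset.sum_comm]
  congr 1; ext q; congr 1; ext p; ring

lemma mode1_tripleProd {n1 n2 n3 m r : ℕ} (U : Matrix (Fin n1) (Fin m) ℝ)
    (A : Fin m → Fin r → Fin r → ℝ) (B : Fin r → Fin n2 → Fin r → ℝ)
    (C : Fin r → Fin r → Fin n3 → ℝ) :
    mode1 U (tripleProd A B C) = tripleProd (fun i q s => ∑ a, U i a * A a q s) B C := by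
  funext i j t
  simp only [mode1, tripleProd, Finset.mul_sum, Finset.sum_mul]
  conv_lhs => rw [Finset.sum_comm]
  refine Finset.sum_congr rfl fun p _ => ?_
  conv_lhs => rw [Finset.sum_comm]
  refine Finset.sum_congr rfl fun q _ => ?_
  conv_lhs => rw [Finset.sum_comm]
  refine Finset.sum_congr rfl fun s _ => ?_
  refine Finset.sum_congr rfl fun a _ => ?_
  ring

lemma mode2_tripleProd {n1 n2 n3 m r : ℕ} (V : Matrix (Fin n2) (Fin m) ℝ)
    (A : Fin n1 → Fin r → Fin r → ℝ) (B : Fin r → Fin m → Fin r → ℝ)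
    (C : Fin r → Fin r → Fin n3 → ℝ) :
    mode2 V (tripleProd A B C) = tripleProd A (fun p j s => ∑ b, V j b * B p b s) C := by
  funext i j t
  simp only [mode2, tripleProd, Finset.mul_sum, Finset.sum_mul]
  conv_lhs => rw [Finset.sum_comm]
  refine Finset.sum_congr rfl fun p _ => ?_
  conv_lhs => rw [Finset.sum_comm]
  refine Finset.sum_congr rfl fun q _ => ?_
  conv_lhs => rw [Finset.sum_comm]
  refine Finset.sum_congr rfl fun s _ => ?_
  refine Finset.sum_congr rfl fun a _ => ?_
  ring

lemma mode3_tripleProd {n1 n2 n3 m r : ℕ} (W : Matrix (Fin n3) (Fin m) ℝ)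
    (A : Fin n1 → Fin r → Fin r → ℝ) (B : Fin r → Fin n2 → Fin r → ℝ)
    (C : Fin r → Fin r → Fin m → ℝ) :
    mode3 W (tripleProd A B C) = tripleProd A B (fun p q t => ∑ c, W t c * C p q c) := by
  funext i j t
  simp only [mode3, tripleProd, Finset.mul_sum, Finset.sum_mul]
  conv_lhs => rw [Finset.sum_comm]
  refine Finset.sum_congr rfl fun p _ => ?_
  conv_lhs => rw [Finset.sum_comm]
  refine Finset.sum_congr rfl fun q _ => ?_
  conv_lhs => rw [Finset.sum_comm]
  refine Finset.sum_congr rfl fun s _ => ?_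
  refine Finset.sum_congr rfl fun a _ => ?_
  ring

lemma trip12 {a b c r : ℕ} (ha : a ≤ r) (hb : b ≤ r) (D : Fin a → Fin b → Fin c → ℝ) :
    ∃ (A : Fin a → Fin r → Fin r → ℝ) (B : Fin r → Fin b → Fin r → ℝ)
      (C : Fin r → Fin r → Fin c → ℝ), D = tripleProd A B C := by
  refine ⟨fun i q s => if q = Fin.castLE ha i then 1 else 0,
    fun p j s => if p = Fin.castLE hb j ∧ s = Fin.castLE hb j then 1 else 0,
    fun p q t => if h : p.1 < b ∧ q.1 < a then D ⟨q.1, h.2⟩ ⟨p.1, h.1⟩ t else 0, ?_⟩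
  funext i j t
  simp only [tripleProd]
  rw [Fintype.sum_eq_single (Fin.castLE hb j) (fun p hp => by
    apply Finset.sum_eq_zero; intro q _
    apply Finset.sum_eq_zero; intro s _
    simp [hp])]
  rw [Fintype.sum_eq_single (Fin.castLE ha i) (fun q hq => by
    apply Finset.sum_eq_zero; intro s _
    simp [hq])]
  rw [Fintype.sum_eq_single (Fin.castLE hb j) (fun s hs => by simp [hs])]
  simp [Fin.castLE, Fin.eta, i.isLt, j.isLt]

lemma trip13 {a b c r : ℕ} (ha : a ≤ r) (hc : c ≤ r) (D : Fin a → Fin b → Fin c → ℝ) :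
    ∃ (A : Fin a → Fin r → Fin r → ℝ) (B : Fin r → Fin b → Fin r → ℝ)
      (C : Fin r → Fin r → Fin c → ℝ), D = tripleProd A B C := by
  refine ⟨fun i q s => if q = Fin.castLE ha i ∧ s = Fin.castLE ha i then 1 else 0,
    fun p j s => if h : p.1 < c ∧ s.1 < a then D ⟨s.1, h.2⟩ j ⟨p.1, h.1⟩ else 0,
    fun p q t => if p = Fin.castLE hc t then 1 else 0, ?_⟩
  funext i j t
  simp only [tripleProd]
  rw [Fintype.sum_eq_single (Fin.castLE hc t) (fun p hp => by
    apply Finset.sum_eq_zero; intro q _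
    apply Finset.sum_eq_zero; intro s _
    simp [hp])]
  rw [Fintype.sum_eq_single (Fin.castLE ha i) (fun q hq => by
    apply Finset.sum_eq_zero; intro s _
    simp [hq])]
  rw [Fintype.sum_eq_single (Fin.castLE ha i) (fun s hs => by simp [hs])]
  simp [Fin.castLE, Fin.eta, i.isLt, t.isLt]

lemma trip23 {a b c r : ℕ} (hb : b ≤ r) (hc : c ≤ r) (D : Fin a → Fin b → Fin c → ℝ) :
    ∃ (A : Fin a → Fin r → Fin r → ℝ) (B : Fin r → Fin b → Fin r → ℝ)
      (C : Fin r → Fin r → Fin c → ℝ), D = tripleProd A B C := by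
  refine ⟨fun i q s => if h : q.1 < c ∧ s.1 < b then D i ⟨s.1, h.2⟩ ⟨q.1, h.1⟩ else 0,
    fun p j s => if s = Fin.castLE hb j then 1 else 0,
    fun p q t => if p = Fin.castLE hc t ∧ q = Fin.castLE hc t then 1 else 0, ?_⟩
  funext i j t
  simp only [tripleProd]
  rw [Fintype.sum_eq_single (Fin.castLE hc t) (fun p hp => by
    apply Finset.sum_eq_zero; intro q _
    apply Finset.sum_eq_zero; intro s _
    simp [hp])]
  rw [Fintype.sum_eq_single (Fin.castLE hc t) (fun q hq => by
    apply Finset.sum_eq_zero; intro s _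
    simp [hq])]
  rw [Fintype.sum_eq_single (Fin.castLE hb j) (fun s hs => by simp [hs])]
  simp [Fin.castLE, Fin.eta, j.isLt, t.isLt]


theorem stmt8 {n1 n2 n3 : ℕ} (X : Fin n1 → Fin n2 → Fin n3 → ℝ) :
    TriRank X ≤ mid (unfold1 X).rank (unfold2 X).rank (unfold3 X).rank := by
  obtain ⟨U1, L1, hP1⟩ := proj_exists (unfold1 X)
  obtain ⟨U2, L2, hP2⟩ := proj_exists (unfold2 X)
  obtain ⟨U3, L3, hP3⟩ := proj_exists (unfold3 X)
  have fix1 : mode1 (U1 * L1) X = X := by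
    funext i j t
    simpa [mode1, Matrix.mul_apply, unfold1] using hP1 (j, t) i
  have fix2 : mode2 (U2 * L2) X = X := by
    funext i j t
    simpa [mode2, Matrix.mul_apply, unfold2] using hP2 (i, t) j
  have fix3 : mode3 (U3 * L3) X = X := by
    funext i j t
    simpa [mode3, Matrix.mul_apply, unfold3] using hP3 (i, j) t
  set m := mid (unfold1 X).rank (unfold2 X).rank (unfold3 X).rank with hm
  set D := mode1 L1 (mode2 L2 (mode3 L3 X)) with hD
  have hX : mode1 U1 (mode2 U2 (mode3 U3 D)) = X := by
    rw [hD, ← mode13_comm, ← mode23_comm, mode3_mode3, fix3, ← mode12_comm,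
      mode2_mode2, fix2, mode1_mode1, fix1]
  have hcase : ((unfold1 X).rank ≤ m ∧ (unfold2 X).rank ≤ m) ∨
      ((unfold1 X).rank ≤ m ∧ (unfold3 X).rank ≤ m) ∨
      ((unfold2 X).rank ≤ m ∧ (unfold3 X).rank ≤ m) := by
    simp only [hm, mid]
    omega
  obtain ⟨A, B, C, hDd⟩ : ∃ (A : Fin (unfold1 X).rank → Fin m → Fin m → ℝ)
      (B : Fin m → Fin (unfold2 X).rank → Fin m → ℝ)
      (C : Fin m → Fin m → Fin (unfold3 X).rank → ℝ), D = tripleProd A B C := by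
    rcases hcase with ⟨h1, h2⟩ | ⟨h1, h2⟩ | ⟨h1, h2⟩
    · exact trip12 h1 h2 D
    · exact trip13 h1 h2 D
    · exact trip23 h1 h2 D
  unfold TriRank
  apply Nat.sInf_le
  exact ⟨fun i q s => ∑ a, U1 i a * A a q s, fun p j s => ∑ b, U2 j b * B p b s,
    fun p q t => ∑ c, U3 t c * C p q c,
    hX.symm.trans
      (by rw [hDd, mode3_tripleProd, mode2_tripleProd, mode1_tripleProd])⟩
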